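/- The polar of Ω_θ, defined as Ω_θ°(Z) = sup{⟨Z,X⟩ : Ω_θ(X) ≤ 1}, equals sup{uᵀZv : θ(u,v) ≤ 1}. -/

import Mathlib

open Matrix Filter
open scoped ENNReal BigOperators
open scoped NNReal

/-- The matrix factorization regularizer: infimum over all factorizations `X = U * Vᵀ`
(with a variable number `r` of columns) of the sum of `θ` applied to column pairs. -/
noncomputable def Omega {D N : ℕ} (θ : (Fin D → ℝ) → (Fin N → ℝ) → ℝ≥0∞)
    (X : Matrix (Fin D) (Fin N) ℝ) : ℝ≥0∞ :=
  ⨅ (r : ℕ) (U : Matrix (Fin D) (Fin r) ℝ) (V : Matrix (Fin N) (Fin r) ℝ)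
    (_ : U * Vᵀ = X), ∑ i : Fin r, θ (fun d => U d i) (fun n => V n i)

/-- `θ` is a rank-1 regularizer: positively homogeneous of degree 2, `θ(0,0) = 0`
(nonnegativity is automatic in `ℝ≥0∞`), and `θ(uₙ,vₙ) → ∞` whenever `‖uₙvₙᵀ‖_F → ∞`. -/
def IsRankOneReg {D N : ℕ} (θ : (Fin D → ℝ) → (Fin N → ℝ) → ℝ≥0∞) : Prop :=
  (∀ (α : ℝ), 0 ≤ α → ∀ u v, θ (α • u) (α • v) = ENNReal.ofReal (α ^ 2) * θ u v) ∧
  (θ 0 0 = 0) ∧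
  (∀ (u : ℕ → Fin D → ℝ) (v : ℕ → Fin N → ℝ),
    Tendsto (fun k => Real.sqrt (∑ d, ∑ m, (u k d * v k m) ^ 2)) atTop atTop →
    Tendsto (fun k => θ (u k) (v k)) atTop (nhds ⊤))

/-- The Frobenius (trace) inner product on matrices. -/
noncomputable def frobInner {D N : ℕ} (A B : Matrix (Fin D) (Fin N) ℝ) : ℝ :=
  ∑ d, ∑ n, A d n * B d n

lemma frob_factor {D N r : ℕ} (Z : Matrix (Fin D) (Fin N) ℝ)
    (U : Matrix (Fin D) (Fin r) ℝ) (V : Matrix (Fin N) (Fin r) ℝ) :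
    frobInner Z (U * Vᵀ) = ∑ i : Fin r, (fun d => U d i) ⬝ᵥ Z *ᵥ (fun n => V n i) := by
  unfold frobInner
  simp only [Matrix.mul_apply, Matrix.transpose_apply, dotProduct, Matrix.mulVec,
    Finset.mul_sum, Finset.sum_mul]
  conv_lhs => rw [show (∑ x : Fin D, ∑ y : Fin N, ∑ i : Fin r, Z x y * (U x i * V y i))
    = ∑ x : Fin D, ∑ i : Fin r, ∑ y : Fin N, Z x y * (U x i * V y i) from
    Finset.sum_congr rfl fun d _ => Finset.sum_comm]
  rw [Finset.sum_comm]
  exact Finset.sum_congr rfl fun i _ => Finset.sum_congr rfl fun d _ =>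
    Finset.sum_congr rfl fun n _ => by ring

lemma dot_smul_smul {D N : ℕ} (Z : Matrix (Fin D) (Fin N) ℝ) (β : ℝ)
    (u : Fin D → ℝ) (v : Fin N → ℝ) :
    (β • u) ⬝ᵥ Z *ᵥ (β • v) = β ^ 2 * (u ⬝ᵥ Z *ᵥ v) := by
  rw [smul_dotProduct, Matrix.mulVec_smul, dotProduct_smul, smul_eq_mul, smul_eq_mul]
  ring

lemma ofReal_sum_le {ι : Type*} (s : Finset ι) (f : ι → ℝ) :
    ENNReal.ofReal (∑ i ∈ s, f i) ≤ ∑ i ∈ s, ENNReal.ofReal (f i) := by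
  classical
  induction s using Finset.induction with
  | empty => simp
  | @insert a s h ih =>
      rw [Finset.sum_insert h, Finset.sum_insert h]
      exact le_trans ENNReal.ofReal_add_le (add_le_add_right ih _)

/-- The polar of `Ω_θ` equals `sup{uᵀZv : θ(u,v) ≤ 1}`. -/
theorem omega_polar {D N : ℕ} (θ : (Fin D → ℝ) → (Fin N → ℝ) → ℝ≥0∞)
    (hθ : IsRankOneReg θ) (Z : Matrix (Fin D) (Fin N) ℝ) :
    (⨆ (X : Matrix (Fin D) (Fin N) ℝ) (_ : Omega θ X ≤ 1),
        ENNReal.ofReal (frobInner Z X)) =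
    (⨆ (u : Fin D → ℝ) (v : Fin N → ℝ) (_ : θ u v ≤ 1),
        ENNReal.ofReal (u ⬝ᵥ Z *ᵥ v)) := by
  obtain ⟨hhom, hzero, -⟩ := hθ
  set S := (⨆ (u : Fin D → ℝ) (v : Fin N → ℝ) (_ : θ u v ≤ 1),
        ENNReal.ofReal (u ⬝ᵥ Z *ᵥ v)) with hSdef
  have hmem : ∀ u v, θ u v ≤ 1 → ENNReal.ofReal (u ⬝ᵥ Z *ᵥ v) ≤ S := by
    intro u v h
    exact le_iSup₂_of_le u v (le_iSup_of_le h le_rfl)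
  apply le_antisymm
  · -- LHS ≤ S
    refine iSup_le fun X => iSup_le fun hX => ?_
    by_cases hS : S = ⊤
    · rw [hS]; exact le_top
    apply ENNReal.le_of_forall_pos_le_add
    intro ε hε _
    -- pick δ with δ * S ≤ ε
    set s : ℝ≥0 := S.toNNReal with hs
    set δ : ℝ≥0 := ε / (s + 1) with hδ
    have hδpos : 0 < δ := by positivity
    have hδS : (δ : ℝ≥0∞) * S ≤ ε := by
      have hSs : S = (s : ℝ≥0∞) := (ENNReal.coe_toNNReal hS).symm
      rw [hSs, ← ENNReal.coe_mul, ENNReal.coe_le_coe]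
      calc δ * s ≤ δ * (s + 1) := by gcongr; exact le_self_add
        _ = ε := by rw [hδ, div_mul_cancel₀]; positivity
    -- get a factorization with sum < 1 + δ
    have hlt : Omega θ X < 1 + δ := lt_of_le_of_lt hX
      (ENNReal.lt_add_right ENNReal.one_ne_top (by exact_mod_cast hδpos.ne'))
    rw [Omega] at hlt
    simp only [iInf_lt_iff] at hlt
    obtain ⟨r, U, V, hUV, hsum⟩ := hlt
    -- key bound per column
    have key : ∀ i : Fin r,
        ENNReal.ofReal ((fun d => U d i) ⬝ᵥ Z *ᵥ (fun n => V n i))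
          ≤ θ (fun d => U d i) (fun n => V n i) * S := by
      intro i
      set u : Fin D → ℝ := fun d => U d i
      set v : Fin N → ℝ := fun n => V n i
      set c : ℝ := u ⬝ᵥ Z *ᵥ v with hc
      have hti : θ u v ≤ ∑ j : Fin r, θ (fun d => U d j) (fun n => V n j) :=
        Finset.single_le_sum (f := fun j => θ (fun d => U d j) (fun n => V n j))
          (fun _ _ => zero_le) (Finset.mem_univ i)
      have htne : θ u v ≠ ⊤ := by
        intro h
        rw [h] at hti
        exact absurd (top_le_iff.mp hti ▸ hsum) (by simp)
      by_cases ht0 : θ u v = 0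
      · -- show c ≤ 0
        rw [ht0, zero_mul, nonpos_iff_eq_zero, ENNReal.ofReal_eq_zero]
        by_contra hcpos
        push_neg at hcpos
        have hcpos' : 0 < c := hcpos
        set β : ℝ := Real.sqrt ((S.toReal + 1) / c) with hβ
        have hβnn : 0 ≤ β := Real.sqrt_nonneg _
        have hβsq : β ^ 2 = (S.toReal + 1) / c := by
          rw [hβ, Real.sq_sqrt]
          positivity
        have hθβ : θ (β • u) (β • v) ≤ 1 := by
          rw [hhom β hβnn, ht0, mul_zero]; exact zero_le
        have h1 := hmem _ _ hθβ
        rw [dot_smul_smul, hβsq, div_mul_cancel₀ _ hcpos'.ne'] at h1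
        rw [ENNReal.ofReal_add ENNReal.toReal_nonneg zero_le_one,
          ENNReal.ofReal_toReal hS, ENNReal.ofReal_one] at h1
        exact absurd h1 (by simpa using (ENNReal.lt_add_right hS one_ne_zero).not_ge)
      · -- scale by a = (θ u v).toReal
        set a : ℝ := (θ u v).toReal with ha
        have hapos : 0 < a := ENNReal.toReal_pos ht0 htne
        set β : ℝ := (Real.sqrt a)⁻¹ with hβ
        have hβnn : 0 ≤ β := by positivity
        have hβsq : β ^ 2 = a⁻¹ := by
          rw [hβ, inv_pow, Real.sq_sqrt hapos.le]
        have hθβ : θ (β • u) (β • v) ≤ 1 := by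
          rw [hhom β hβnn, hβsq, ← ENNReal.ofReal_toReal htne, ← ha,
            ← ENNReal.ofReal_mul (by positivity), inv_mul_cancel₀ hapos.ne',
            ENNReal.ofReal_one]
        have h1 := hmem _ _ hθβ
        rw [dot_smul_smul, hβsq] at h1
        calc ENNReal.ofReal c = ENNReal.ofReal (a * (a⁻¹ * c)) := by
              rw [← mul_assoc, mul_inv_cancel₀ hapos.ne', one_mul]
          _ = ENNReal.ofReal a * ENNReal.ofReal (a⁻¹ * c) :=
              ENNReal.ofReal_mul hapos.le
          _ ≤ θ u v * S := by
              rw [ha, ENNReal.ofReal_toReal htne]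
              exact mul_le_mul_right h1 _
    calc ENNReal.ofReal (frobInner Z X)
        = ENNReal.ofReal (∑ i : Fin r, (fun d => U d i) ⬝ᵥ Z *ᵥ (fun n => V n i)) := by
          rw [← hUV, frob_factor]
      _ ≤ ∑ i : Fin r, ENNReal.ofReal ((fun d => U d i) ⬝ᵥ Z *ᵥ (fun n => V n i)) :=
          ofReal_sum_le _ _
      _ ≤ ∑ i : Fin r, θ (fun d => U d i) (fun n => V n i) * S :=
          Finset.sum_le_sum fun i _ => key i
      _ = (∑ i : Fin r, θ (fun d => U d i) (fun n => V n i)) * S :=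
          (Finset.sum_mul _ _ _).symm
      _ ≤ (1 + δ) * S := mul_le_mul_left hsum.le _
      _ = S + δ * S := by rw [add_mul, one_mul]
      _ ≤ S + ε := add_le_add_right hδS _
  · -- S ≤ LHS
    refine iSup_le fun u => iSup_le fun v => iSup_le fun huv => ?_
    set X : Matrix (Fin D) (Fin N) ℝ := Matrix.of fun d n => u d * v n with hX
    have hfact : (Matrix.of fun d (_ : Fin 1) => u d) *
        (Matrix.of fun n (_ : Fin 1) => v n)ᵀ = X := by
      ext d n; simp [Matrix.mul_apply, hX]
    have hOm : Omega θ X ≤ 1 := by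
      refine le_trans (iInf_le_of_le 1 (iInf_le_of_le _ (iInf_le_of_le _
        (iInf_le_of_le hfact ?_)))) huv
      simp
    have hfrob : frobInner Z X = u ⬝ᵥ Z *ᵥ v := by
      rw [← hfact, frob_factor]
      simp
    exact le_iSup₂_of_le X hOm (by rw [hfrob])
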